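/- Let B be a strongly separable k-algebra with symmetric separability idempotent e¹⊗e² (satisfying be¹⊗e² = e¹⊗e²b, e¹e² = 1, e¹⊗e² = e²⊗e¹) and trace form ω with ω(e¹)e² = 1 = e¹ω(e²). On H = B^{op} ⊗ B with multiplication (a⊗b)(a'⊗b') = a'a ⊗ bb', the maps Δ(a⊗b) = (e¹a ⊗ be'¹) ⊗ (e² ⊗ e'²) and ε(a⊗b) = ω(a)ω(b) make H a Frobenius algebra: Δ is coassociative, counital via ε, and an H-bimodule map. -/
import Mathlib


open TensorProduct MulOpposite

/-!
`B` is a strongly separable `k`-algebra with symmetric separability idempotent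
`e¹⊗e² = ∑ i, u i ⊗ v i` and trace form `ω`.  On `H = Bᵐᵒᵖ ⊗ B` (so that
`(a⊗b)(a'⊗b') = a'a ⊗ bb'`) the maps `Δ(a⊗b) = ∑_{i,j} (uᵢa ⊗ b uⱼ) ⊗ (vᵢ ⊗ vⱼ)` and
`ε(a⊗b) = ω(a)ω(b)` make `H` a Frobenius algebra.
-/

section SepMaps

variable (k : Type*) [Field k] (B : Type*) [Ring B] [Algebra k B]
  (ι : Type*) [Fintype ι] (u v : ι → B) (ω : B →ₗ[k] k)

/-- The comultiplication `Δ(a⊗b) = (e¹a ⊗ be'¹) ⊗ (e² ⊗ e'²)` on `H = Bᵐᵒᵖ ⊗ B`. -/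
noncomputable def deltaH :
    (Bᵐᵒᵖ ⊗[k] B) →ₗ[k] (Bᵐᵒᵖ ⊗[k] B) ⊗[k] (Bᵐᵒᵖ ⊗[k] B) :=
  TensorProduct.lift <| LinearMap.mk₂ k
    (fun (a : Bᵐᵒᵖ) (b : B) => ∑ i : ι, ∑ j : ι,
      ((op (u i * a.unop) ⊗ₜ[k] (b * u j)) ⊗ₜ[k] (op (v i) ⊗ₜ[k] v j)))
    (by intros; simp [mul_add, add_tmul, Finset.sum_add_distrib])
    (by intros; simp [mul_smul_comm, smul_tmul', Finset.smul_sum])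
    (by intros; simp [add_mul, tmul_add, add_tmul, Finset.sum_add_distrib])
    (by intros; simp [mul_smul_comm, smul_tmul', tmul_smul, Finset.smul_sum])

/-- The counit `ε(a⊗b) = ω(a)ω(b)` on `H = Bᵐᵒᵖ ⊗ B`. -/
noncomputable def epsH : (Bᵐᵒᵖ ⊗[k] B) →ₗ[k] k :=
  TensorProduct.lift <| LinearMap.mk₂ k
    (fun (a : Bᵐᵒᵖ) (b : B) => ω a.unop * ω b)
    (by intros; simp [add_mul])
    (by intros; simp [smul_eq_mul]; ring)
    (by intros; simp [mul_add])
    (by intros; simp [smul_eq_mul]; ring)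

end SepMaps

set_option synthInstance.maxHeartbeats 1000000
set_option maxHeartbeats 1000000

section Aux2

variable {k : Type*} [Field k] {B : Type*} [Ring B] [Algebra k B]
  {ι : Type*} [Fintype ι] {u v : ι → B}

theorem cas_aux (hc : ∀ b : B, (∑ i, (b * u i) ⊗ₜ[k] v i) = ∑ i, u i ⊗ₜ[k] (v i * b))
    {M : Type*} [AddCommMonoid M] [Module k M] (f : B →ₗ[k] B →ₗ[k] M) (b : B) :
    ∑ i, f (b * u i) (v i) = ∑ i, f (u i) (v i * b) := by
  have h := congrArg (TensorProduct.lift f) (hc b)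
  simpa [map_sum] using h

theorem symm_aux (hs : (∑ i, u i ⊗ₜ[k] v i) = ∑ i, (v i : B) ⊗ₜ[k] u i)
    {M : Type*} [AddCommMonoid M] [Module k M] (f : B →ₗ[k] B →ₗ[k] M) :
    ∑ i, f (u i) (v i) = ∑ i, f (v i) (u i) := by
  have h := congrArg (TensorProduct.lift f) hs
  simpa [map_sum] using h

theorem casr_aux (hc : ∀ b : B, (∑ i, (b * u i) ⊗ₜ[k] v i) = ∑ i, u i ⊗ₜ[k] (v i * b))
    (hs : (∑ i, u i ⊗ₜ[k] v i) = ∑ i, (v i : B) ⊗ₜ[k] u i)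
    {M : Type*} [AddCommMonoid M] [Module k M] (f : B →ₗ[k] B →ₗ[k] M) (b : B) :
    ∑ i, f (u i * b) (v i) = ∑ i, f (u i) (b * v i) := by
  calc ∑ i, f (u i * b) (v i)
      = ∑ i, f (v i * b) (u i) := by
        have := symm_aux hs (LinearMap.mk₂ k (fun x y => f (x * b) y)
          (by intros; simp [add_mul]) (by intros; simp [smul_mul_assoc])
          (by intros; simp) (by intros; simp))
        simpa using this
    _ = ∑ i, f (v i) (b * u i) := by
        have := cas_aux hc f.flip b
        simpa using this.symm
    _ = ∑ i, f (u i) (b * v i) := by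
        have := symm_aux hs (LinearMap.mk₂ k (fun x y => f y (b * x))
          (by intros; simp [mul_add]) (by intros; simp [mul_smul_comm])
          (by intros; simp) (by intros; simp))
        simpa using this

theorem claim_a (hc : ∀ b : B, (∑ i, (b * u i) ⊗ₜ[k] v i) = ∑ i, u i ⊗ₜ[k] (v i * b))
    (hs : (∑ i, u i ⊗ₜ[k] v i) = ∑ i, (v i : B) ⊗ₜ[k] u i)
    (ω : B →ₗ[k] k) (tl : (∑ i, ω (u i) • v i) = 1) (a : B) :
    ∑ i, ω (u i * a) • v i = a := by
  have := casr_aux hc hs (LinearMap.mk₂ k (fun x y => ω x • (y : B))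
    (by intros; simp [add_smul]) (by intros; simp [mul_smul])
    (by intros; simp) (by intros; rw [smul_comm])) a
  simp only [LinearMap.mk₂_apply] at this
  rw [this]
  calc ∑ i, ω (u i) • (a * v i) = a * ∑ i, ω (u i) • v i := by
        rw [Finset.mul_sum]; simp [mul_smul_comm]
    _ = a := by rw [tl, mul_one]

theorem claim_b (hc : ∀ b : B, (∑ i, (b * u i) ⊗ₜ[k] v i) = ∑ i, u i ⊗ₜ[k] (v i * b))
    (ω : B →ₗ[k] k) (tl : (∑ i, ω (u i) • v i) = 1) (b : B) :
    ∑ i, ω (b * u i) • v i = b := by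
  have := cas_aux hc (LinearMap.mk₂ k (fun x y => ω x • (y : B))
    (by intros; simp [add_smul]) (by intros; simp [mul_smul])
    (by intros; simp) (by intros; rw [smul_comm])) b
  simp only [LinearMap.mk₂_apply] at this
  rw [this]
  calc ∑ i, ω (u i) • (v i * b) = (∑ i, ω (u i) • v i) * b := by
        rw [Finset.sum_mul]; simp [smul_mul_assoc]
    _ = b := by rw [tl, one_mul]

theorem claim_c (ω : B →ₗ[k] k) (tr : (∑ i, ω (v i) • u i) = 1) (a : B) :
    ∑ i, ω (v i) • (u i * a) = a := by
  calc ∑ i, ω (v i) • (u i * a) = (∑ i, ω (v i) • u i) * a := by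
        rw [Finset.sum_mul]; simp [smul_mul_assoc]
    _ = a := by rw [tr, one_mul]

theorem claim_d (ω : B →ₗ[k] k) (tr : (∑ i, ω (v i) • u i) = 1) (b : B) :
    ∑ i, ω (v i) • (b * u i) = b := by
  calc ∑ i, ω (v i) • (b * u i) = b * ∑ i, ω (v i) • u i := by
        rw [Finset.mul_sum]; simp [mul_smul_comm]
    _ = b := by rw [tr, mul_one]


theorem op_mul_right (a : Bᵐᵒᵖ) (w : B) : a * op w = op (w * a.unop) := rfl
theorem op_mul_left (a : Bᵐᵒᵖ) (w : B) : op w * a = op (a.unop * w) := rfl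

theorem deltaH_tmul (a : Bᵐᵒᵖ) (b : B) :
    deltaH k B ι u v (a ⊗ₜ[k] b) = ∑ s : ι × ι,
      (op (u s.1 * a.unop) ⊗ₜ[k] (b * u s.2)) ⊗ₜ[k] (op (v s.1) ⊗ₜ[k] v s.2) := by
  simp [deltaH, Fintype.sum_prod_type]

theorem delta_sum_L (x : Bᵐᵒᵖ ⊗[k] B) :
    deltaH k B ι u v x = ∑ s : ι × ι,
      (x * (op (u s.1) ⊗ₜ[k] u s.2)) ⊗ₜ[k] (op (v s.1) ⊗ₜ[k] v s.2) := by
  induction x using TensorProduct.induction_on with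
  | zero => rw [(deltaH k B ι u v).map_zero]; simp
  | add y z hy hz =>
      rw [(deltaH k B ι u v).map_add, hy, hz]
      simp [add_mul, add_tmul, Finset.sum_add_distrib]
  | tmul a b =>
    rw [deltaH_tmul]
    refine Finset.sum_congr rfl fun s _ => ?_
    rw [Algebra.TensorProduct.tmul_mul_tmul, op_mul_right]

theorem sumH_mul (f : ι × ι → (Bᵐᵒᵖ ⊗[k] B) ⊗[k] (Bᵐᵒᵖ ⊗[k] B))
    (z : (Bᵐᵒᵖ ⊗[k] B) ⊗[k] (Bᵐᵒᵖ ⊗[k] B)) :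
    (∑ s : ι × ι, f s) * z = ∑ s : ι × ι, f s * z :=
  map_sum (LinearMap.mulRight k z) f Finset.univ

theorem mul_sumH (f : ι × ι → (Bᵐᵒᵖ ⊗[k] B) ⊗[k] (Bᵐᵒᵖ ⊗[k] B))
    (z : (Bᵐᵒᵖ ⊗[k] B) ⊗[k] (Bᵐᵒᵖ ⊗[k] B)) :
    z * (∑ s : ι × ι, f s) = ∑ s : ι × ι, z * f s :=
  map_sum (LinearMap.mulLeft k z) f Finset.univ

theorem keyE_sum
    (hc : ∀ b : B, (∑ i, (b * u i) ⊗ₜ[k] v i) = ∑ i, u i ⊗ₜ[k] (v i * b))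
    (hs : (∑ i, u i ⊗ₜ[k] v i) = ∑ i, (v i : B) ⊗ₜ[k] u i)
    (x : Bᵐᵒᵖ ⊗[k] B) :
    ∑ s : ι × ι, (x * (op (u s.1) ⊗ₜ[k] u s.2)) ⊗ₜ[k] (op (v s.1) ⊗ₜ[k] v s.2)
      = ∑ s : ι × ι, (op (u s.1) ⊗ₜ[k] u s.2) ⊗ₜ[k] ((op (v s.1) ⊗ₜ[k] v s.2) * x) := by
  induction x using TensorProduct.induction_on with
  | zero => simp
  | add y z hy hz => simp [add_mul, mul_add, add_tmul, tmul_add, Finset.sum_add_distrib, hy, hz]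
  | tmul a b =>
    simp only [Algebra.TensorProduct.tmul_mul_tmul, op_mul_right, op_mul_left,
      Fintype.sum_prod_type]
    calc ∑ i, ∑ j, (op (u i * a.unop) ⊗ₜ[k] (b * u j)) ⊗ₜ[k] (op (v i) ⊗ₜ[k] v j)
        = ∑ i, ∑ j, (op (u i) ⊗ₜ[k] (b * u j)) ⊗ₜ[k] (op (a.unop * v i) ⊗ₜ[k] v j) := by
          have := casr_aux hc hs (LinearMap.mk₂ k
            (fun x y => ∑ j, (op x ⊗ₜ[k] (b * u j)) ⊗ₜ[k] ((op y : Bᵐᵒᵖ) ⊗ₜ[k] v j))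
            (by intros; simp [add_tmul, Finset.sum_add_distrib])
            (by intros; simp [tmul_smul, ← smul_tmul', ← Finset.smul_sum])
            (by intros; simp [add_tmul, tmul_add, Finset.sum_add_distrib])
            (by intros; simp [tmul_smul, ← smul_tmul', ← Finset.smul_sum])) a.unop
          simpa using this
      _ = ∑ j, ∑ i, (op (u i) ⊗ₜ[k] (b * u j)) ⊗ₜ[k] (op (a.unop * v i) ⊗ₜ[k] v j) :=
          Finset.sum_comm
      _ = ∑ j, ∑ i, (op (u i) ⊗ₜ[k] (u j : B)) ⊗ₜ[k] (op (a.unop * v i) ⊗ₜ[k] (v j * b)) := by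
          have := cas_aux hc (LinearMap.mk₂ k
            (fun x y => ∑ i, ((op (u i) : Bᵐᵒᵖ) ⊗ₜ[k] x) ⊗ₜ[k] (op (a.unop * v i) ⊗ₜ[k] y))
            (by intros; simp [tmul_add, add_tmul, Finset.sum_add_distrib])
            (by intros; simp [tmul_smul, ← smul_tmul', ← Finset.smul_sum])
            (by intros; simp [tmul_add, Finset.sum_add_distrib])
            (by intros; simp [tmul_smul, ← smul_tmul', ← Finset.smul_sum])) b
          simpa using this
      _ = ∑ i, ∑ j, (op (u i) ⊗ₜ[k] (u j : B)) ⊗ₜ[k] (op (a.unop * v i) ⊗ₜ[k] (v j * b)) :=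
          Finset.sum_comm

theorem delta_sum_R
    (hc : ∀ b : B, (∑ i, (b * u i) ⊗ₜ[k] v i) = ∑ i, u i ⊗ₜ[k] (v i * b))
    (hs : (∑ i, u i ⊗ₜ[k] v i) = ∑ i, (v i : B) ⊗ₜ[k] u i)
    (x : Bᵐᵒᵖ ⊗[k] B) :
    deltaH k B ι u v x = ∑ s : ι × ι,
      (op (u s.1) ⊗ₜ[k] u s.2) ⊗ₜ[k] ((op (v s.1) ⊗ₜ[k] v s.2) * x) := by
  rw [delta_sum_L, keyE_sum hc hs]

theorem bimod_r
    (hc : ∀ b : B, (∑ i, (b * u i) ⊗ₜ[k] v i) = ∑ i, u i ⊗ₜ[k] (v i * b))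
    (hs : (∑ i, u i ⊗ₜ[k] v i) = ∑ i, (v i : B) ⊗ₜ[k] u i)
    (x y : Bᵐᵒᵖ ⊗[k] B) :
    deltaH k B ι u v (x * y) = deltaH k B ι u v x * ((1 : Bᵐᵒᵖ ⊗[k] B) ⊗ₜ[k] y) := by
  rw [delta_sum_R hc hs (x * y), delta_sum_R hc hs x, sumH_mul]
  refine Finset.sum_congr rfl fun s _ => ?_
  rw [Algebra.TensorProduct.tmul_mul_tmul, mul_one, mul_assoc]

theorem bimod_l (x y : Bᵐᵒᵖ ⊗[k] B) :
    deltaH k B ι u v (x * y) = (x ⊗ₜ[k] (1 : Bᵐᵒᵖ ⊗[k] B)) * deltaH k B ι u v y := by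
  rw [delta_sum_L (u := u) (v := v) (x * y), delta_sum_L (u := u) (v := v) y, mul_sumH]
  refine Finset.sum_congr rfl fun s _ => ?_
  rw [Algebra.TensorProduct.tmul_mul_tmul, one_mul, mul_assoc]

theorem keyE_sum_map
    (hc : ∀ b : B, (∑ i, (b * u i) ⊗ₜ[k] v i) = ∑ i, u i ⊗ₜ[k] (v i * b))
    (hs : (∑ i, u i ⊗ₜ[k] v i) = ∑ i, (v i : B) ⊗ₜ[k] u i)
    (h c : Bᵐᵒᵖ ⊗[k] B) :
    ∑ t : ι × ι, (h * (op (u t.1) ⊗ₜ[k] u t.2)) ⊗ₜ[k] ((op (v t.1) ⊗ₜ[k] v t.2) ⊗ₜ[k] c)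
      = ∑ t : ι × ι, (op (u t.1) ⊗ₜ[k] u t.2) ⊗ₜ[k]
          (((op (v t.1) ⊗ₜ[k] v t.2) * h) ⊗ₜ[k] c) := by
  have := congrArg
    (LinearMap.lTensor (Bᵐᵒᵖ ⊗[k] B) ((TensorProduct.mk k (Bᵐᵒᵖ ⊗[k] B) (Bᵐᵒᵖ ⊗[k] B)).flip c))
    (keyE_sum hc hs h)
  simpa [map_sum] using this

theorem coassoc_aux
    (hc : ∀ b : B, (∑ i, (b * u i) ⊗ₜ[k] v i) = ∑ i, u i ⊗ₜ[k] (v i * b))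
    (hs : (∑ i, u i ⊗ₜ[k] v i) = ∑ i, (v i : B) ⊗ₜ[k] u i)
    (x : Bᵐᵒᵖ ⊗[k] B) :
    (TensorProduct.assoc k _ _ _)
        ((LinearMap.rTensor _ (deltaH k B ι u v)) (deltaH k B ι u v x))
      = (LinearMap.lTensor _ (deltaH k B ι u v)) (deltaH k B ι u v x) := by
  rw [delta_sum_R hc hs x, map_sum, map_sum, map_sum]
  simp only [LinearMap.rTensor_tmul, LinearMap.lTensor_tmul]
  have step1 : ∀ s : ι × ι,
      (TensorProduct.assoc k (Bᵐᵒᵖ ⊗[k] B) (Bᵐᵒᵖ ⊗[k] B) (Bᵐᵒᵖ ⊗[k] B))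
        ((deltaH k B ι u v (op (u s.1) ⊗ₜ[k] u s.2)) ⊗ₜ[k]
          ((op (v s.1) ⊗ₜ[k] v s.2) * x))
      = ∑ t : ι × ι, (op (u t.1) ⊗ₜ[k] u t.2) ⊗ₜ[k]
          (((op (v t.1) ⊗ₜ[k] v t.2) * (op (u s.1) ⊗ₜ[k] u s.2)) ⊗ₜ[k]
            ((op (v s.1) ⊗ₜ[k] v s.2) * x)) := by
    intro s
    rw [delta_sum_L (u := u) (v := v) (op (u s.1) ⊗ₜ[k] u s.2), sum_tmul, map_sum]
    simp only [TensorProduct.assoc_tmul]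
    exact keyE_sum_map hc hs _ _
  rw [Finset.sum_congr rfl (fun s _ => step1 s), Finset.sum_comm]
  refine Finset.sum_congr rfl fun t _ => ?_
  rw [← tmul_sum]
  congr 1
  rw [bimod_r hc hs, delta_sum_L (u := u) (v := v), sumH_mul]
  simp [Algebra.TensorProduct.tmul_mul_tmul]

theorem split_sum (P : ι → Bᵐᵒᵖ) (Q : ι → B) (c d : ι → k) :
    ∑ s : ι × ι, (c s.1 * d s.2) • (P s.1 ⊗ₜ[k] Q s.2)
      = (∑ i, c i • P i) ⊗ₜ[k] (∑ j, d j • Q j) := by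
  rw [sum_tmul, Fintype.sum_prod_type]
  refine Finset.sum_congr rfl fun i _ => ?_
  rw [tmul_sum]
  refine Finset.sum_congr rfl fun j _ => ?_
  simp [smul_tmul', smul_smul, mul_comm]

theorem epsH_tmul (ω : B →ₗ[k] k) (a : Bᵐᵒᵖ) (b : B) :
    epsH k B ω (a ⊗ₜ[k] b) = ω a.unop * ω b := by simp [epsH]

theorem counit_l
    (hc : ∀ b : B, (∑ i, (b * u i) ⊗ₜ[k] v i) = ∑ i, u i ⊗ₜ[k] (v i * b))
    (hs : (∑ i, u i ⊗ₜ[k] v i) = ∑ i, (v i : B) ⊗ₜ[k] u i)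
    (ω : B →ₗ[k] k) (tl : (∑ i, ω (u i) • v i) = 1) (a : Bᵐᵒᵖ) (b : B) :
    (TensorProduct.lid k _)
        ((LinearMap.rTensor _ (epsH k B ω)) (deltaH k B ι u v (a ⊗ₜ[k] b))) = a ⊗ₜ[k] b := by
  rw [deltaH_tmul, map_sum, map_sum]
  simp only [LinearMap.rTensor_tmul, epsH_tmul, TensorProduct.lid_tmul, unop_op]
  rw [split_sum (fun i => op (v i)) v (fun i => ω (u i * a.unop)) (fun j => ω (b * u j)),
    claim_b hc ω tl b]
  congr 1
  calc ∑ i, ω (u i * a.unop) • (op (v i) : Bᵐᵒᵖ)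
      = op (∑ i, ω (u i * a.unop) • v i) := by simp
    _ = a := by rw [claim_a hc hs ω tl a.unop, op_unop]

theorem counit_r
    (ω : B →ₗ[k] k) (tr : (∑ i, ω (v i) • u i) = 1) (a : Bᵐᵒᵖ) (b : B) :
    (TensorProduct.rid k _)
        ((LinearMap.lTensor _ (epsH k B ω)) (deltaH k B ι u v (a ⊗ₜ[k] b))) = a ⊗ₜ[k] b := by
  rw [deltaH_tmul, map_sum, map_sum]
  simp only [LinearMap.lTensor_tmul, epsH_tmul, TensorProduct.rid_tmul, unop_op]
  rw [split_sum (fun i => op (u i * a.unop)) (fun j => b * u j) (fun i => ω (v i))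
    (fun j => ω (v j)), claim_d ω tr b]
  congr 1
  calc ∑ i, ω (v i) • (op (u i * a.unop) : Bᵐᵒᵖ)
      = op (∑ i, ω (v i) • (u i * a.unop)) := by simp
    _ = a := by rw [claim_c ω tr a.unop, op_unop]

end Aux2

/-- Let `B` be a strongly separable `k`-algebra with symmetric separability
idempotent `∑ i, u i ⊗ v i` (so `b e¹ ⊗ e² = e¹ ⊗ e² b`, `e¹e² = 1`, `e¹⊗e² = e²⊗e¹`) and
trace form `ω` with `ω(e¹)e² = 1 = e¹ω(e²)`.  On `H = Bᵐᵒᵖ ⊗ B` (with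
`(a⊗b)(a'⊗b') = a'a ⊗ bb'`), the maps `Δ(a⊗b) = (e¹a ⊗ be'¹) ⊗ (e² ⊗ e'²)` and
`ε(a⊗b) = ω(a)ω(b)` make `H` a Frobenius algebra: `Δ` is coassociative, counital via `ε`,
and an `H`-bimodule map. -/
theorem separable_square_frobenius
    (k : Type*) [Field k] (B : Type*) [Ring B] [Algebra k B] [FiniteDimensional k B]
    (ι : Type*) [Fintype ι] (u v : ι → B)
    (sep_casimir : ∀ b : B, (∑ i, (b * u i) ⊗ₜ[k] v i) = ∑ i, u i ⊗ₜ[k] (v i * b))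
    (sep_one : (∑ i, u i * v i) = 1)
    (sep_symm : (∑ i, u i ⊗ₜ[k] v i) = ∑ i, v i ⊗ₜ[k] u i)
    (ω : B →ₗ[k] k)
    (trace_left : (∑ i, ω (u i) • v i) = 1)
    (trace_right : (∑ i, ω (v i) • u i) = 1) :
    (∀ x : Bᵐᵒᵖ ⊗[k] B,
      (TensorProduct.assoc k _ _ _)
          ((LinearMap.rTensor _ (deltaH k B ι u v)) (deltaH k B ι u v x))
        = (LinearMap.lTensor _ (deltaH k B ι u v)) (deltaH k B ι u v x)) ∧
    (∀ x : Bᵐᵒᵖ ⊗[k] B,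
      (TensorProduct.lid k _)
          ((LinearMap.rTensor _ (epsH k B ω)) (deltaH k B ι u v x)) = x ∧
      (TensorProduct.rid k _)
          ((LinearMap.lTensor _ (epsH k B ω)) (deltaH k B ι u v x)) = x) ∧
    (∀ x y : Bᵐᵒᵖ ⊗[k] B,
      deltaH k B ι u v (x * y) = deltaH k B ι u v x * ((1 : Bᵐᵒᵖ ⊗[k] B) ⊗ₜ[k] y) ∧
      deltaH k B ι u v (x * y) = (x ⊗ₜ[k] (1 : Bᵐᵒᵖ ⊗[k] B)) * deltaH k B ι u v y) := by
  refine ⟨fun x => coassoc_aux sep_casimir sep_symm x, fun x => ⟨?_, ?_⟩,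
    fun x y => ⟨bimod_r sep_casimir sep_symm x y, bimod_l x y⟩⟩
  · induction x using TensorProduct.induction_on with
    | zero =>
        rw [(deltaH k B ι u v).map_zero,
          (LinearMap.rTensor (Bᵐᵒᵖ ⊗[k] B) (epsH k B ω)).map_zero,
          (TensorProduct.lid k (Bᵐᵒᵖ ⊗[k] B)).map_zero]
    | tmul a b => exact counit_l sep_casimir sep_symm ω trace_left a b
    | add y z hy hz =>
        rw [(deltaH k B ι u v).map_add,
          (LinearMap.rTensor (Bᵐᵒᵖ ⊗[k] B) (epsH k B ω)).map_add,
          (TensorProduct.lid k (Bᵐᵒᵖ ⊗[k] B)).map_add, hy, hz]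
  · induction x using TensorProduct.induction_on with
    | zero =>
        rw [(deltaH k B ι u v).map_zero,
          (LinearMap.lTensor (Bᵐᵒᵖ ⊗[k] B) (epsH k B ω)).map_zero,
          (TensorProduct.rid k (Bᵐᵒᵖ ⊗[k] B)).map_zero]
    | tmul a b => exact counit_r ω trace_right a b
    | add y z hy hz =>
        rw [(deltaH k B ι u v).map_add,
          (LinearMap.lTensor (Bᵐᵒᵖ ⊗[k] B) (epsH k B ω)).map_add,
          (TensorProduct.rid k (Bᵐᵒᵖ ⊗[k] B)).map_add, hy, hz]
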